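/- For integers a, b, k with k ≥ b > a ≥ 1, m ≥ 2 and 0 ≤ h ≤ m−2: Σ_{λ ∈ BR'_{a,b,k}(m,h,a)} u^{ℓ_a(λ)} v^{ℓ_b(λ)} q^{|λ|} = (u q^a + v q^b) u^{h+1} v^{m−h−2} q^{(m−1)b + k·C(h+1,2) + (k−b+a)(h+1)} [m−2 choose h]_k, and Σ_{λ ∈ BR'_{a,b,k}(m,h,b)} u^{ℓ_a(λ)} v^{ℓ_b(λ)} q^{|λ|} = (u q^a + v q^b) u^{h} v^{m−h−1} q^{(m−1)b + k·C(h+1,2) + (k−b+a)h} [m−2 choose h]_k. -/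

import Mathlib

/-- The finite q-Pochhammer symbol `(t;q)_n = ∏_{i=0}^{n-1} (1 - t qⁱ)`. -/
noncomputable def qPoch (t q : ℂ) (n : ℕ) : ℂ := ∏ i ∈ Finset.range n, (1 - t * q ^ i)

/-- The infinite q-Pochhammer symbol `(t;q)_∞ = ∏_{i≥0} (1 - t qⁱ)`. -/
noncomputable def qPochInf (t q : ℂ) : ℂ := ∏' i : ℕ, (1 - t * q ^ i)

/-- The Gaussian binomial coefficient `[A choose B]` in base `q`:
`(q;q)_A / ((q;q)_B (q;q)_{A-B})` for `A ≥ B ≥ 0`, and `0` otherwise. -/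
noncomputable def gbinom (q : ℂ) (A B : ℕ) : ℂ :=
  if B ≤ A then qPoch q q A / (qPoch q q B * qPoch q q (A - B)) else 0

/-- `lcount k c l` is the number of parts of `l` congruent to `c` modulo `k`. -/
def lcount (k c : ℕ) (l : List ℕ) : ℕ := (l.filter (fun x => x % k = c % k)).length

/-- Membership in `BR'_{a,b,k}(m)`: partitions `(λ_1,…,λ_m)` with exactly `m` parts, each
`≡ a` or `b (mod k)`, only parts `≡ b (mod k)` possibly repeated, `λ_m ∈ {a, b}`, and for
consecutive parts `λ_i - λ_{i+1} ≤ k` with strict inequality if `λ_{i+1} ≡ b (mod k)`. -/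
def memBR' (a b k m : ℕ) (l : List ℕ) : Prop :=
  l.Pairwise (· ≥ ·) ∧ l.length = m ∧
    (∀ x ∈ l, 0 < x ∧ (x % k = a % k ∨ x % k = b % k)) ∧
    (∀ x : ℕ, x % k = a % k → l.count x ≤ 1) ∧
    (l.getLast? = some a ∨ l.getLast? = some b) ∧
    l.Chain' (fun x y => x ≤ y + k ∧ (y % k = b % k → x < y + k))


section Aux

lemma qPoch_succ (t q : ℂ) (n : ℕ) : qPoch t q (n+1) = qPoch t q n * (1 - t * q ^ n) := by
  simp [qPoch, Finset.prod_range_succ]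

lemma qPoch_zero (t q : ℂ) : qPoch t q 0 = 1 := by simp [qPoch]

lemma qPoch_ne_zero {Q : ℂ} (hQ : ‖Q‖ < 1) (n : ℕ) : qPoch Q Q n ≠ 0 := by
  rw [qPoch]
  apply Finset.prod_ne_zero_iff.2
  intro i _
  intro hc
  have : Q * Q ^ i = 1 := by linear_combination -hc
  have h1 : ‖Q * Q ^ i‖ < 1 := by
    rw [norm_mul, norm_pow]
    have h2 : ‖Q‖ ^ i ≤ 1 := pow_le_one₀ (norm_nonneg _) hQ.le
    nlinarith [norm_nonneg Q, pow_nonneg (norm_nonneg Q) i]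
  rw [this] at h1
  simp at h1

lemma gbinom_self (Q : ℂ) (hQ : ‖Q‖ < 1) (n : ℕ) : gbinom Q n n = 1 := by
  simp [gbinom, div_self, qPoch_zero, qPoch_ne_zero hQ]

lemma gbinom_zero (Q : ℂ) (hQ : ‖Q‖ < 1) (n : ℕ) : gbinom Q n 0 = 1 := by
  simp [gbinom, qPoch_zero, div_self, qPoch_ne_zero hQ]

lemma gbinom_of_gt (Q : ℂ) {n h : ℕ} (hn : n < h) : gbinom Q n h = 0 := by
  rw [gbinom, if_neg (by omega)]

/-- Pascal identity -/
lemma gbinom_pascal (Q : ℂ) (hQ : ‖Q‖ < 1) (n h : ℕ) :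
    gbinom Q (n+1) (h+1) = Q ^ (h+1) * gbinom Q n (h+1) + gbinom Q n h := by
  rcases lt_trichotomy h n with hlt | rfl | hgt
  · obtain ⟨N, rfl⟩ : ∃ N, n = h + 1 + N := ⟨n - h - 1, by omega⟩
    have e1 : gbinom Q (h+1+N+1) (h+1) = qPoch Q Q (h+1+N+1) / (qPoch Q Q (h+1) * qPoch Q Q (N+1)) := by
      rw [gbinom, if_pos (by omega)]
      have : h+1+N+1 - (h+1) = N+1 := by omega
      rw [this]
    have e2 : gbinom Q (h+1+N) (h+1) = qPoch Q Q (h+1+N) / (qPoch Q Q (h+1) * qPoch Q Q N) := by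
      rw [gbinom, if_pos (by omega)]
      have : h+1+N - (h+1) = N := by omega
      rw [this]
    have e3 : gbinom Q (h+1+N) h = qPoch Q Q (h+1+N) / (qPoch Q Q h * qPoch Q Q (N+1)) := by
      rw [gbinom, if_pos (by omega)]
      have : h+1+N - h = N+1 := by omega
      rw [this]
    rw [e1, e2, e3]
    have p1 : qPoch Q Q (h+1+N+1) = qPoch Q Q (h+1+N) * (1 - Q * Q ^ (h+1+N)) := qPoch_succ _ _ _
    have p2 : qPoch Q Q (h+1) = qPoch Q Q h * (1 - Q * Q ^ h) := qPoch_succ _ _ _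
    have p3 : qPoch Q Q (N+1) = qPoch Q Q N * (1 - Q * Q ^ N) := qPoch_succ _ _ _
    have nz1 : qPoch Q Q h ≠ 0 := qPoch_ne_zero hQ _
    have nz2 : qPoch Q Q N ≠ 0 := qPoch_ne_zero hQ _
    have nzh : (1 - Q * Q ^ h) ≠ 0 := by
      have := qPoch_ne_zero hQ (h+1)
      rw [p2] at this
      exact right_ne_zero_of_mul this
    have nzN : (1 - Q * Q ^ N) ≠ 0 := by
      have := qPoch_ne_zero hQ (N+1)
      rw [p3] at this
      exact right_ne_zero_of_mul this
    rw [p1, p2, p3]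
    field_simp
    ring
  · rw [gbinom_self Q hQ, gbinom_of_gt Q (by omega), gbinom_self Q hQ]
    ring
  · rw [gbinom_of_gt Q (by omega), gbinom_of_gt Q (by omega), gbinom_of_gt Q (by omega)]
    ring

def boolLists : ℕ → Finset (List Bool)
  | 0 => {[]}
  | n+1 => (boolLists n).image (true :: ·) ∪ (boolLists n).image (false :: ·)

lemma mem_boolLists {n : ℕ} {s : List Bool} : s ∈ boolLists n ↔ s.length = n := by
  induction n generalizing s with
  | zero => simp [boolLists, List.length_eq_zero_iff]
  | succ n ih =>
    simp only [boolLists, Finset.mem_union, Finset.mem_image]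
    constructor
    · rintro (⟨t, ht, rfl⟩ | ⟨t, ht, rfl⟩) <;> simp [ih.1 ht]
    · intro hl
      rcases s with _ | ⟨x, t⟩
      · simp at hl
      · cases x
        · exact Or.inr ⟨t, ih.2 (by simpa using hl), rfl⟩
        · exact Or.inl ⟨t, ih.2 (by simpa using hl), rfl⟩

lemma boolLists_succ_snoc (n : ℕ) :
    boolLists (n+1) = (boolLists n).image (· ++ [true]) ∪ (boolLists n).image (· ++ [false]) := by
  ext s
  simp only [mem_boolLists, Finset.mem_union, Finset.mem_image]
  constructor
  · intro hl
    have hne : s ≠ [] := by rintro rfl; simp at hl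
    have hs : s.dropLast ++ [s.getLast hne] = s := List.dropLast_append_getLast hne
    have hd : s.dropLast.length = n := by
      have := s.length_dropLast
      omega
    cases hgl : s.getLast hne
    · right; exact ⟨s.dropLast, by simp [mem_boolLists, hd], by rw [← hgl, hs]⟩
    · left; exact ⟨s.dropLast, by simp [mem_boolLists, hd], by rw [← hgl, hs]⟩
  · rintro (⟨t, ht, rfl⟩ | ⟨t, ht, rfl⟩) <;> simp [ht]

def wsum : ℕ → List Bool → ℕ
  | _, [] => 0
  | c, x :: t => (bif x then c else 0) + wsum (c+1) t

lemma wsum_succ (c : ℕ) (s : List Bool) : wsum (c+1) s = wsum c s + s.count true := by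
  induction s generalizing c with
  | nil => simp [wsum]
  | cons x t ih =>
    cases x <;> simp [wsum, ih (c+1), List.count_cons] <;> omega

noncomputable def Flist (Q : ℂ) (c n h : ℕ) : ℂ :=
  ∑ s ∈ (boolLists n).filter (fun s => s.count true = h), Q ^ wsum c s

lemma sum_cons_split {n : ℕ} (p : List Bool → Prop) [DecidablePred p] (g : List Bool → ℂ) :
    ∑ s ∈ (boolLists (n+1)).filter p, g s
      = ∑ t ∈ (boolLists n).filter (fun t => p (true :: t)), g (true :: t)
        + ∑ t ∈ (boolLists n).filter (fun t => p (false :: t)), g (false :: t) := by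
  have hdisj : Disjoint (((boolLists n).image (true :: ·)).filter p)
      (((boolLists n).image (false :: ·)).filter p) := by
    rw [Finset.disjoint_left]
    intro s hs hs'
    simp only [Finset.mem_filter, Finset.mem_image] at hs hs'
    obtain ⟨⟨t, _, rfl⟩, _⟩ := hs
    obtain ⟨⟨t', _, he⟩, _⟩ := hs'
    simp at he
  rw [show boolLists (n+1) = (boolLists n).image (true :: ·) ∪ (boolLists n).image (false :: ·) from rfl,
    Finset.filter_union, Finset.sum_union hdisj, Finset.filter_image, Finset.filter_image,
    Finset.sum_image (by intro x _ y _ hxy; simpa using hxy),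
    Finset.sum_image (by intro x _ y _ hxy; simpa using hxy)]

lemma sum_snoc_split {n : ℕ} (p : List Bool → Prop) [DecidablePred p] (g : List Bool → ℂ) :
    ∑ s ∈ (boolLists (n+1)).filter p, g s
      = ∑ t ∈ (boolLists n).filter (fun t => p (t ++ [true])), g (t ++ [true])
        + ∑ t ∈ (boolLists n).filter (fun t => p (t ++ [false])), g (t ++ [false]) := by
  have hdisj : Disjoint (((boolLists n).image (· ++ [true])).filter p)
      (((boolLists n).image (· ++ [false])).filter p) := by
    rw [Finset.disjoint_left]
    intro s hs hs'
    simp only [Finset.mem_filter, Finset.mem_image] at hs hs'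
    obtain ⟨⟨t, _, rfl⟩, _⟩ := hs
    obtain ⟨⟨t', _, he⟩, _⟩ := hs'
    have := congrArg (fun l => l.getLast?) he
    simp at this
  rw [boolLists_succ_snoc, Finset.filter_union, Finset.sum_union hdisj,
    Finset.filter_image, Finset.filter_image,
    Finset.sum_image (by intro x _ y _ hxy; simpa using hxy),
    Finset.sum_image (by intro x _ y _ hxy; simpa using hxy)]


lemma count_cons_true (t : List Bool) : (true :: t).count true = t.count true + 1 := by
  simp [List.count_cons]

lemma count_cons_false (t : List Bool) : (false :: t).count true = t.count true := by
  simp [List.count_cons]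

lemma wsum_cons_true (c : ℕ) (t : List Bool) : wsum c (true :: t) = c + wsum (c+1) t := by
  simp [wsum]

lemma wsum_cons_false (c : ℕ) (t : List Bool) : wsum c (false :: t) = wsum (c+1) t := by
  simp [wsum]

lemma choose_two_succ (h : ℕ) : (h+1).choose 2 = h + h.choose 2 := by
  rw [Nat.choose_succ_succ, Nat.choose_one_right]

lemma Flist_eq (Q : ℂ) (hQ : ‖Q‖ < 1) (n : ℕ) : ∀ c h,
    Flist Q c n h = Q ^ (c * h + h.choose 2) * gbinom Q n h := by
  induction n with
  | zero =>
    intro c h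
    rw [Flist, show boolLists 0 = {[]} from rfl, Finset.filter_singleton]
    rcases h with _ | h
    · simp [wsum, gbinom_zero Q hQ]
    · rw [if_neg (by simp), gbinom_of_gt Q (by omega)]
      simp
  | succ n ih =>
    intro c h
    rw [Flist, sum_cons_split (fun s => s.count true = h) (fun s => Q ^ wsum c s)]
    rcases h with _ | h
    · rw [Finset.filter_eq_empty_iff.2 (by intro t _; simp [count_cons_true])]
      simp only [Finset.sum_empty, zero_add]
      have : ∑ t ∈ (boolLists n).filter (fun t => (false :: t).count true = 0), Q ^ wsum c (false :: t)
          = Flist Q (c+1) n 0 := by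
        rw [Flist]
        apply Finset.sum_congr
        · apply Finset.filter_congr; intro t _; simp [count_cons_false]
        · intro t _; rw [wsum_cons_false]
      rw [this, ih, gbinom_zero Q hQ, gbinom_zero Q hQ]
      simp
    · have e1 : ∑ t ∈ (boolLists n).filter (fun t => (true :: t).count true = h+1), Q ^ wsum c (true :: t)
          = Q ^ c * Flist Q (c+1) n h := by
        rw [Flist, Finset.mul_sum]
        apply Finset.sum_congr
        · apply Finset.filter_congr; intro t _; simp [count_cons_true]
        · intro t _; rw [wsum_cons_true, pow_add]
      have e2 : ∑ t ∈ (boolLists n).filter (fun t => (false :: t).count true = h+1), Q ^ wsum c (false :: t)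
          = Flist Q (c+1) n (h+1) := by
        rw [Flist]
        apply Finset.sum_congr
        · apply Finset.filter_congr; intro t _; simp [count_cons_false]
        · intro t _; rw [wsum_cons_false]
      rw [e1, e2, ih, ih, gbinom_pascal Q hQ, choose_two_succ]
      ring


def res (a b : ℕ) (x : Bool) : ℕ := bif x then a else b

def cnt (s : List Bool) : ℕ := s.dropLast.count true

def fmap (a b k : ℕ) : List Bool → List ℕ
  | [] => []
  | x :: t => (k * cnt (x :: t) + res a b x) :: fmap a b k t

lemma cnt_single (x : Bool) : cnt [x] = 0 := by simp [cnt]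

lemma cnt_cons₂ (x y : Bool) (t : List Bool) :
    cnt (x :: y :: t) = (bif x then 1 else 0) + cnt (y :: t) := by
  cases x <;> simp [cnt, List.dropLast_cons₂, List.count_cons] <;> omega

lemma cnt_concat (t : List Bool) (r : Bool) : cnt (t ++ [r]) = t.count true := by
  simp [cnt, List.dropLast_concat]

lemma fmap_length (a b k : ℕ) (s : List Bool) : (fmap a b k s).length = s.length := by
  induction s with
  | nil => rfl
  | cons x t ih => simp [fmap, ih]

lemma mod_diff {k x y : ℕ} (hk : 0 < k) (h1 : y ≤ x) (h2 : x ≤ y + k) :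
    x % k = y % k + (x - y) ∨ x % k + k = y % k + (x - y) := by
  obtain ⟨d, rfl⟩ := Nat.exists_eq_add_of_le h1
  have hd : d ≤ k := by omega
  have he : y % k < k := Nat.mod_lt _ hk
  have hsimp : (y + d) - y = d := by omega
  rw [hsimp, Nat.add_mod]
  rcases Nat.lt_or_ge d k with hdk | hdk
  · rw [Nat.mod_eq_of_lt hdk]
    rcases Nat.lt_or_ge (y % k + d) k with hlt | hge
    · left; rw [Nat.mod_eq_of_lt hlt]
    · right
      rw [Nat.mod_eq_sub_mod hge, Nat.mod_eq_of_lt (by omega)]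
      omega
  · have hdk' : d = k := le_antisymm hd hdk
    subst hdk'
    right
    simp [Nat.mod_self]

section Main

variable {a b k : ℕ} (ha : 1 ≤ a) (hab : a < b) (hbk : b ≤ k)

include ha hab hbk

lemma hk_pos : 0 < k := by omega

lemma amod : a % k = a := Nat.mod_eq_of_lt (by omega)

lemma bmod : b % k = b ∨ (b = k ∧ b % k = 0) := by
  rcases Nat.lt_or_ge b k with hlt | hge
  · exact Or.inl (Nat.mod_eq_of_lt hlt)
  · have : b = k := by omega
    subst this
    exact Or.inr ⟨rfl, Nat.mod_self b⟩

lemma abmod_ne : a % k ≠ b % k := by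
  rcases bmod ha hab hbk with hb | ⟨rfl, hb⟩ <;> rw [amod ha hab hbk, hb] <;> omega

lemma part_mod (c : ℕ) (x : Bool) : (k * c + res a b x) % k = res a b x % k :=
  Nat.mul_add_mod k c _

lemma part_rel (x y : Bool) (c : ℕ) :
    k * c + res a b y ≤ k * ((bif x then 1 else 0) + c) + res a b x
    ∧ k * ((bif x then 1 else 0) + c) + res a b x ≤ (k * c + res a b y) + k
    ∧ (k * ((bif x then 1 else 0) + c) + res a b x = k * c + res a b y →
        (k * ((bif x then 1 else 0) + c) + res a b x) % k = b % k)
    ∧ ((k * c + res a b y) % k = b % k →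
        k * ((bif x then 1 else 0) + c) + res a b x < (k * c + res a b y) + k) := by
  have hamod := amod ha hab hbk
  have hb := bmod ha hab hbk
  have hne := abmod_ne ha hab hbk
  have hpm := part_mod (a := a) (b := b) (k := k) ha hab hbk ((bif x then 1 else 0) + c) x
  have hqm := part_mod (a := a) (b := b) (k := k) ha hab hbk c y
  have hmul : k * ((bif x then 1 else 0) + c) = (bif x then k else 0) + k * c := by
    cases x <;> simp <;> ring
  rw [hmul] at hpm ⊢
  cases x <;> cases y <;>
    simp only [res, cond_true, cond_false] at hpm hqm ⊢ <;>
    omega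

lemma fmap_chain (s : List Bool) :
    (fmap a b k s).Chain' (fun p q' => q' ≤ p ∧ p ≤ q' + k ∧ (p = q' → p % k = b % k)
      ∧ (q' % k = b % k → p < q' + k)) := by
  induction s with
  | nil => simp [fmap, List.Chain']
  | cons x t ih =>
    rcases t with _ | ⟨y, t'⟩
    · simp [fmap, List.Chain']
    · simp only [fmap] at ih ⊢
      rw [List.Chain', List.isChain_cons_cons]
      refine ⟨?_, ih⟩
      rw [cnt_cons₂]
      exact part_rel ha hab hbk x y (cnt (y :: t'))

lemma fmap_sorted (s : List Bool) : (fmap a b k s).Pairwise (· ≥ ·) :=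
  List.isChain_iff_pairwise.1 ((fmap_chain ha hab hbk s).imp (fun _ _ hr => hr.1))

lemma fmap_chain' (s : List Bool) :
    (fmap a b k s).Chain' (fun x y => x ≤ y + k ∧ (y % k = b % k → x < y + k)) :=
  (fmap_chain ha hab hbk s).imp (fun _ _ hr => ⟨hr.2.1, hr.2.2.2⟩)

lemma fmap_elem (s : List Bool) : ∀ z ∈ fmap a b k s,
    0 < z ∧ (z % k = a % k ∨ z % k = b % k) := by
  induction s with
  | nil => simp [fmap]
  | cons x t ih =>
    intro z hz
    simp only [fmap, List.mem_cons] at hz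
    rcases hz with rfl | hz
    · refine ⟨by cases x <;> simp [res] <;> omega, ?_⟩
      rw [part_mod ha hab hbk]
      cases x <;> simp [res]
    · exact ih z hz

lemma count_le_one_of_sorted (l : List ℕ) (hs : l.Pairwise (· ≥ ·))
    (hc : l.Chain' (fun p q' => p = q' → p % k = b % k)) :
    ∀ z : ℕ, z % k = a % k → l.count z ≤ 1 := by
  induction l with
  | nil => simp
  | cons p t ih =>
    intro z hz
    rcases eq_or_ne p z with rfl | hpz
    · have hz0 : t.count p = 0 := by
        rw [List.count_eq_zero]
        intro hmem
        rcases t with _ | ⟨qq, t'⟩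
        · simp at hmem
        · have hq : qq ≥ p := by
            have h1 : ∀ w ∈ qq :: t', w ≤ p := (List.pairwise_cons.1 hs).1
            have h2 : ∀ w ∈ t', w ≤ qq := (List.pairwise_cons.1 (List.pairwise_cons.1 hs).2).1
            rcases List.mem_cons.1 hmem with rfl | hmem'
            · exact le_refl _
            · exact h2 p hmem'
          have hpq : p = qq := le_antisymm hq ((List.pairwise_cons.1 hs).1 qq (by simp))
          have := (List.isChain_cons_cons.1 hc).1 hpq
          rw [hz] at this
          exact abmod_ne ha hab hbk this
      rw [List.count_cons]
      simp [hz0]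
    · rw [List.count_cons]
      simp only [hpz, if_false, beq_iff_eq, if_neg hpz, add_zero]
      exact ih (List.pairwise_cons.1 hs).2 hc.tail z hz

lemma fmap_getLast (s : List Bool) (hs : s ≠ []) :
    (fmap a b k s).getLast? = some (res a b (s.getLast hs)) := by
  induction s with
  | nil => simp at hs
  | cons x t ih =>
    rcases t with _ | ⟨y, t'⟩
    · simp [fmap, cnt_single]
    · have h1 : fmap a b k (x :: y :: t')
          = (k * cnt (x :: y :: t') + res a b x) :: fmap a b k (y :: t') := rfl
      have h2 : fmap a b k (y :: t') = (k * cnt (y :: t') + res a b y) :: fmap a b k t' := rfl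
      rw [h1, h2, List.getLast?_cons_cons, ← h2, ih (by simp), List.getLast_cons_cons]

lemma fmap_memBR' (s : List Bool) (hs : s ≠ []) : memBR' a b k s.length (fmap a b k s) := by
  refine ⟨fmap_sorted ha hab hbk s, fmap_length a b k s, fmap_elem ha hab hbk s, ?_, ?_,
    fmap_chain' ha hab hbk s⟩
  · exact count_le_one_of_sorted ha hab hbk _ (fmap_sorted ha hab hbk s)
      ((fmap_chain ha hab hbk s).imp (fun _ _ hr => hr.2.2.1))
  · rw [fmap_getLast ha hab hbk s hs]
    cases s.getLast hs
    · right; rfl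
    · left; rfl

lemma fmap_sum (s : List Bool) :
    (fmap a b k s).sum = k * wsum 1 s.dropLast + a * s.count true + b * s.count false := by
  induction s with
  | nil => simp [fmap, wsum]
  | cons x t ih =>
    rcases t with _ | ⟨y, t'⟩
    · cases x <;> simp [fmap, wsum, cnt_single, res, List.count_cons]
    · have h1 : fmap a b k (x :: y :: t')
          = (k * cnt (x :: y :: t') + res a b x) :: fmap a b k (y :: t') := rfl
      rw [h1, List.sum_cons, ih, cnt_cons₂, List.dropLast_cons₂]
      have h3 : wsum 1 (x :: (y :: t').dropLast)
          = (bif x then 1 else 0) + wsum 2 ((y :: t').dropLast) := by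
        cases x <;> simp [wsum]
      have h4 : wsum 2 ((y :: t').dropLast) = wsum 1 ((y :: t').dropLast)
          + ((y :: t').dropLast).count true := wsum_succ 1 _
      rw [h3, h4]
      cases x <;> simp [res, List.count_cons, cnt] <;> ring

lemma fmap_lcount_a (s : List Bool) : lcount k a (fmap a b k s) = s.count true := by
  induction s with
  | nil => simp [fmap, lcount]
  | cons x t ih =>
    have h1 : fmap a b k (x :: t) = (k * cnt (x :: t) + res a b x) :: fmap a b k t := rfl
    rw [h1, lcount, List.filter_cons]
    have hm := part_mod (a := a) (b := b) (k := k) ha hab hbk (cnt (x :: t)) x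
    simp only [lcount] at ih
    cases x
    · have hnot : ¬ ((k * cnt (false :: t) + res a b false) % k = a % k) := by
        rw [hm]
        exact fun hc => (abmod_ne ha hab hbk) hc.symm
      rw [if_neg (by simpa using hnot), ih, List.count_cons]
      simp
    · have hyes : (k * cnt (true :: t) + res a b true) % k = a % k := hm
      rw [if_pos (by simpa using hyes), List.length_cons, ih, List.count_cons]
      simp

lemma fmap_lcount_b (s : List Bool) : lcount k b (fmap a b k s) = s.count false := by
  induction s with
  | nil => simp [fmap, lcount]
  | cons x t ih =>
    have h1 : fmap a b k (x :: t) = (k * cnt (x :: t) + res a b x) :: fmap a b k t := rfl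
    rw [h1, lcount, List.filter_cons]
    have hm := part_mod (a := a) (b := b) (k := k) ha hab hbk (cnt (x :: t)) x
    simp only [lcount] at ih
    cases x
    · have hyes : (k * cnt (false :: t) + res a b false) % k = b % k := hm
      rw [if_pos (by simpa using hyes), List.length_cons, ih, List.count_cons]
      simp
    · have hnot : ¬ ((k * cnt (true :: t) + res a b true) % k = b % k) := by
        rw [hm]
        exact abmod_ne ha hab hbk
      rw [if_neg (by simpa using hnot), ih, List.count_cons]
      simp

lemma fmap_recover (s : List Bool) :
    (fmap a b k s).map (fun z => decide (z % k = a % k)) = s := by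
  induction s with
  | nil => rfl
  | cons x t ih =>
    have h1 : fmap a b k (x :: t) = (k * cnt (x :: t) + res a b x) :: fmap a b k t := rfl
    rw [h1, List.map_cons, ih]
    congr 1
    rw [part_mod ha hab hbk]
    cases x
    · simp [res]
      exact decide_eq_false fun hc => (abmod_ne ha hab hbk) hc.symm
    · simp [res]

lemma fmap_surj (l : List ℕ) (hne : l ≠ []) (hsort : l.Pairwise (· ≥ ·))
    (helem : ∀ x ∈ l, 0 < x ∧ (x % k = a % k ∨ x % k = b % k))
    (hcnt : ∀ x : ℕ, x % k = a % k → l.count x ≤ 1)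
    (hlast : l.getLast? = some a ∨ l.getLast? = some b)
    (hchain : l.Chain' (fun x y => x ≤ y + k ∧ (y % k = b % k → x < y + k))) :
    l = fmap a b k (l.map (fun z => decide (z % k = a % k))) := by
  have hamod := amod ha hab hbk
  have hbm := bmod ha hab hbk
  have hnemod := abmod_ne ha hab hbk
  induction l with
  | nil => simp at hne
  | cons x t iht =>
    rcases t with _ | ⟨y, t'⟩
    · -- singleton
      have hx : x = a ∨ x = b := by
        rcases hlast with hl | hl <;> simp at hl <;> [left; right] <;> exact hl
      rcases hx with hxa | hxb
      · rw [hxa]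
        simp only [List.map_cons, List.map_nil, hamod, decide_true]
        show [a] = [k * cnt [true] + res a b true]
        rw [cnt_single]
        simp [res]
      · rw [hxb]
        have hdec : decide (b % k = a % k) = false := by
          simp only [decide_eq_false_iff_not]
          exact fun hc => hnemod hc.symm
        simp only [List.map_cons, List.map_nil, hdec]
        show [b] = [k * cnt [false] + res a b false]
        rw [cnt_single]
        simp [res]
    · -- x :: y :: t'
      have hyt : y :: t' = fmap a b k ((y :: t').map (fun z => decide (z % k = a % k))) := by
        apply iht (by simp) (List.pairwise_cons.1 hsort).2
          (fun z hz => helem z (List.mem_cons_of_mem x hz))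
          (fun z hz => le_trans (List.Sublist.count_le z (List.sublist_cons_self x (y :: t'))) (hcnt z hz))
          (by rwa [List.getLast?_cons_cons] at hlast)
          (List.isChain_cons_cons.1 hchain).2
      set s' : List Bool := (y :: t').map (fun z => decide (z % k = a % k)) with hs'
      have hs'cons : s' = decide (y % k = a % k) :: t'.map (fun z => decide (z % k = a % k)) := rfl
      -- head equation : y = k * cnt s' + res a b (decide (y % k = a % k))
      have hyval : y = k * cnt s' + res a b (decide (y % k = a % k)) := by
        have := congrArg List.head? hyt
        rw [hs'cons] at this
        simp only [fmap, List.head?_cons] at this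
        rw [← hs'cons] at this
        exact Option.some.inj this
      -- goal reduces to the head computation
      show x :: y :: t' = fmap a b k (decide (x % k = a % k) :: s')
      have hfs : fmap a b k (decide (x % k = a % k) :: s')
          = (k * cnt (decide (x % k = a % k) :: s') + res a b (decide (x % k = a % k)))
            :: fmap a b k s' := rfl
      rw [hfs, ← hyt]
      congr 1
      -- now the arithmetic
      have hcc : cnt (decide (x % k = a % k) :: s')
          = (bif decide (x % k = a % k) then 1 else 0) + cnt s' := by
        rw [hs'cons]
        exact cnt_cons₂ _ _ _
      rw [hcc]
      have hxy : y ≤ x := (List.pairwise_cons.1 hsort).1 y (by simp)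
      have hch := (List.isChain_cons_cons.1 hchain).1
      have hxk : x ≤ y + k := hch.1
      have hmd := mod_diff (k := k) (x := x) (y := y) (by omega) hxy hxk
      have hxr := (helem x (by simp)).2
      have hyr := (helem y (by simp)).2
      rcases hxr with hxr | hxr
      · -- x ≡ a
        have hdx : decide (x % k = a % k) = true := by simp [hxr]
        rw [hdx]
        rw [show k * ((bif true then 1 else 0) + cnt s') = k * cnt s' + k from by
          simp; ring]
        have hxy_ne : x ≠ y := by
          intro hexy
          have := hcnt x hxr
          rw [List.count_cons, List.count_cons] at this
          simp [hexy] at this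
        rcases hyr with hyr | hyr
        · -- y ≡ a
          have hdy : decide (y % k = a % k) = true := by simp [hyr]
          rw [hdy] at hyval
          simp only [res, cond_true] at hyval ⊢
          rw [hxr, hyr] at hmd
          have : x = y + k := by omega
          omega
        · -- y ≡ b
          have hdy : decide (y % k = a % k) = false := by
            simp only [decide_eq_false_iff_not]
            rw [hyr]
            exact fun hc => hnemod hc.symm
          rw [hdy] at hyval
          simp only [res, cond_true, cond_false] at hyval ⊢
          rw [hxr, hyr] at hmd
          omega
      · -- x ≡ b
        have hdx : decide (x % k = a % k) = false := by
          simp only [decide_eq_false_iff_not]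
          rw [hxr]
          exact fun hc => hnemod hc.symm
        rw [hdx]
        rw [show k * ((bif false then 1 else 0) + cnt s') = k * cnt s' from by simp]
        rcases hyr with hyr | hyr
        · -- y ≡ a
          have hdy : decide (y % k = a % k) = true := by simp [hyr]
          rw [hdy] at hyval
          simp only [res, cond_true, cond_false] at hyval ⊢
          rw [hxr, hyr] at hmd
          omega
        · -- y ≡ b
          have hdy : decide (y % k = a % k) = false := by
            simp only [decide_eq_false_iff_not]
            rw [hyr]
            exact fun hc => hnemod hc.symm
          rw [hdy] at hyval
          have hlt : x < y + k := hch.2 hyr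
          simp only [res, cond_false] at hyval ⊢
          rw [hxr, hyr] at hmd
          omega

lemma count_true_add_false (s : List Bool) : s.count true + s.count false = s.length := by
  induction s with
  | nil => rfl
  | cons x t ih => cases x <;> simp [List.count_cons] <;> omega

lemma res_decide (c0 : ℕ) (x0 : Bool) :
    decide ((k * c0 + res a b x0) % k = a % k) = x0 := by
  rw [part_mod ha hab hbk]
  cases x0
  · simp only [res, cond_false, decide_eq_false_iff_not]
    exact decide_eq_false fun hc => abmod_ne ha hab hbk hc.symm
  · simp only [res, cond_true, decide_eq_true_eq]

lemma BRset_eq (m c0 : ℕ) (hm2 : 2 ≤ m) (x0 : Bool) :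
    {l : List ℕ | memBR' a b k m l ∧ l.head? = some (k * c0 + res a b x0)}
    = ↑(((boolLists m).filter (fun s => s.head? = some x0 ∧ cnt s = c0)).image (fmap a b k)) := by
  ext l
  simp only [Set.mem_setOf_eq, Finset.coe_image, Set.mem_image, Finset.mem_coe,
    Finset.mem_filter]
  constructor
  · rintro ⟨hmem, hhead⟩
    obtain ⟨hsort, hlen, helem, hcnt, hlast, hchain⟩ := hmem
    have hne : l ≠ [] := by intro hc; rw [hc] at hlen; simp at hlen; omega
    have hl := fmap_surj ha hab hbk l hne hsort helem hcnt hlast hchain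
    refine ⟨l.map (fun z => decide (z % k = a % k)), ⟨?_, ?_, ?_⟩, hl.symm⟩
    · exact mem_boolLists.2 (by rw [List.length_map, hlen])
    · rcases l with _ | ⟨x, rest⟩
      · exact absurd rfl hne
      · have hx : x = k * c0 + res a b x0 := by simpa using hhead
        rw [List.map_cons, List.head?_cons, hx, res_decide ha hab hbk]
    · rcases l with _ | ⟨x, rest⟩
      · exact absurd rfl hne
      · have hx : x = k * c0 + res a b x0 := by simpa using hhead
        have hmap : (x :: rest).map (fun z => decide (z % k = a % k))
            = decide (x % k = a % k) :: rest.map (fun z => decide (z % k = a % k)) := rfl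
        have hhd := congrArg List.head? hl
        rw [hmap] at hhd ⊢
        simp only [fmap, List.head?_cons] at hhd
        have heq : x = k * cnt (decide (x % k = a % k)
            :: rest.map (fun z => decide (z % k = a % k)))
            + res a b (decide (x % k = a % k)) := Option.some.inj hhd
        rw [hx, res_decide ha hab hbk] at heq ⊢
        have : k * cnt (x0 :: rest.map (fun z => decide (z % k = a % k))) = k * c0 := by
          cases x0 <;> simp only [res, cond_true, cond_false] at heq <;> omega
        exact (Nat.eq_of_mul_eq_mul_left (by omega) this)
  · rintro ⟨s, ⟨hsmem, hshead, hscnt⟩, rfl⟩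
    have hslen : s.length = m := mem_boolLists.1 hsmem
    have hsne : s ≠ [] := by intro hc; rw [hc] at hslen; simp at hslen; omega
    refine ⟨by rw [← hslen]; exact fmap_memBR' ha hab hbk s hsne, ?_⟩
    rcases s with _ | ⟨x, t⟩
    · exact absurd rfl hsne
    · have hx : x = x0 := by simpa using hshead
      have : fmap a b k (x :: t) = (k * cnt (x :: t) + res a b x) :: fmap a b k t := rfl
      rw [this, List.head?_cons, hscnt, hx]

end Main

end Aux

/-- Generating functions for the partitions in `BR'_{a,b,k}(m,h,a)` (largest part `k(h+1)+a`)
and `BR'_{a,b,k}(m,h,b)` (largest part `kh+b`). -/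
theorem gen_BR'_mha (a b k m h : ℕ) (ha : 1 ≤ a) (hab : a < b) (hbk : b ≤ k)
    (hm : 2 ≤ m) (hh : h ≤ m - 2) (q u v : ℂ) (hq : ‖q‖ < 1) :
    (∑ᶠ l ∈ {l : List ℕ | memBR' a b k m l ∧ l.head? = some (k * (h + 1) + a)},
        u ^ lcount k a l * v ^ lcount k b l * q ^ l.sum
      = (u * q ^ a + v * q ^ b) * u ^ (h + 1) * v ^ (m - h - 2) *
          q ^ ((m - 1) * b + k * Nat.choose (h + 1) 2 + (k - b + a) * (h + 1)) *
          gbinom (q ^ k) (m - 2) h)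
    ∧ (∑ᶠ l ∈ {l : List ℕ | memBR' a b k m l ∧ l.head? = some (k * h + b)},
        u ^ lcount k a l * v ^ lcount k b l * q ^ l.sum
      = (u * q ^ a + v * q ^ b) * u ^ h * v ^ (m - h - 1) *
          q ^ ((m - 1) * b + k * Nat.choose (h + 1) 2 + (k - b + a) * h) *
          gbinom (q ^ k) (m - 2) h) := by
  obtain ⟨n, rfl⟩ : ∃ n, m = n + 2 := ⟨m - 2, by omega⟩
  have hhn : h ≤ n := by omega
  have hk0 : 0 < k := by omega
  have hQ : ‖q ^ k‖ < 1 := by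
    rw [norm_pow]
    exact pow_lt_one₀ (norm_nonneg q) hq (by omega)
  have hinj : ∀ (F : Finset (List Bool)), ∀ s1 ∈ F, ∀ s2 ∈ F,
      fmap a b k s1 = fmap a b k s2 → s1 = s2 := by
    intro F s1 _ s2 _ heq
    rw [← fmap_recover ha hab hbk s1, heq, fmap_recover ha hab hbk s2]
  constructor
  · -- case a : head = k*(h+1)+a
    have ea := BRset_eq ha hab hbk (n+2) (h+1) (by omega) true
    simp only [res, cond_true] at ea
    rw [ea, finsum_mem_coe_finset, Finset.sum_image (hinj _),
      sum_cons_split (fun s => s.head? = some true ∧ cnt s = h+1)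
        (fun s => u ^ lcount k a (fmap a b k s) * v ^ lcount k b (fmap a b k s)
          * q ^ (fmap a b k s).sum)]
    have hemp : Finset.filter (fun t => (false :: t).head? = some true
        ∧ cnt (false :: t) = h+1) (boolLists (n+1)) = ∅ :=
      Finset.filter_eq_empty_iff.2 (by intro t _; simp)
    have hfc : Finset.filter (fun t => (true :: t).head? = some true
        ∧ cnt (true :: t) = h+1) (boolLists (n+1))
        = Finset.filter (fun t => cnt (true :: t) = h + 1) (boolLists (n+1)) :=
      Finset.filter_congr (by intro t _; simp)
    rw [hemp, Finset.sum_empty, add_zero, hfc]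
    rw [sum_snoc_split (fun t => cnt (true :: t) = h + 1)
      (fun t => u ^ lcount k a (fmap a b k (true :: t))
        * v ^ lcount k b (fmap a b k (true :: t)) * q ^ (fmap a b k (true :: t)).sum)]
    have hcond : ∀ (r : Bool) (mid : List Bool),
        (cnt (true :: (mid ++ [r])) = h + 1) = (mid.count true = h) := by
      intro r mid
      rw [show true :: (mid ++ [r]) = (true :: mid) ++ [r] from rfl, cnt_concat]
      simp only [List.count_cons, beq_self_eq_true, if_true, eq_iff_iff]
      constructor <;> intro <;> omega
    have hbranch : ∀ r : Bool,
        ∑ mid ∈ (boolLists n).filter (fun mid => cnt (true :: (mid ++ [r])) = h+1),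
          (u ^ lcount k a (fmap a b k (true :: (mid ++ [r])))
            * v ^ lcount k b (fmap a b k (true :: (mid ++ [r])))
            * q ^ (fmap a b k (true :: (mid ++ [r]))).sum)
        = (u ^ (h + 1 + (bif r then 1 else 0)) * v ^ ((n - h) + (bif r then 0 else 1))
            * q ^ (k + a * (h + 1 + (bif r then 1 else 0)) + b * ((n - h) + (bif r then 0 else 1))))
            * Flist (q ^ k) 2 n h := by
      intro r
      rw [Flist, Finset.mul_sum]
      apply Finset.sum_congr
      · apply Finset.filter_congr
        intro mid _
        rw [hcond]
      · intro mid hmid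
        obtain ⟨hmlen, hmcnt⟩ := Finset.mem_filter.1 hmid
        have hmlen' : mid.length = n := mem_boolLists.1 hmlen
        have hmf : mid.count false = n - h := by
          have := count_true_add_false ha hab hbk mid
          omega
        rw [show true :: (mid ++ [r]) = (true :: mid) ++ [r] from rfl,
          fmap_lcount_a ha hab hbk, fmap_lcount_b ha hab hbk, fmap_sum ha hab hbk,
          List.dropLast_concat]
        have h1 : ((true :: mid) ++ [r]).count true = h + 1 + (bif r then 1 else 0) := by
          cases r <;> simp [List.count_append, List.count_cons, hmcnt]
        have h2 : ((true :: mid) ++ [r]).count false = (n - h) + (bif r then 0 else 1) := by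
          cases r <;> simp [List.count_append, List.count_cons, hmf]
        have h3 : wsum 1 (true :: mid) = 1 + wsum 2 mid := by simp [wsum]
        rw [h1, h2, h3]
        ring
    rw [hbranch true, hbranch false, Flist_eq (q ^ k) hQ n 2 h]
    simp only [cond_true, cond_false]
    rw [show n + 2 - h - 2 = n - h from by omega, show n + 2 - 2 = n from by omega,
      show n + 2 - 1 = n + 1 from by omega, choose_two_succ]
    obtain ⟨e, rfl⟩ : ∃ e, k = b + e := ⟨k - b, by omega⟩
    obtain ⟨g, rfl⟩ : ∃ g, n = h + g := ⟨n - h, by omega⟩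
    rw [show h + g - h = g from by omega, show b + e - b + a = e + a from by omega]
    ring
  · -- case b : head = k*h+b
    have eb := BRset_eq ha hab hbk (n+2) h (by omega) false
    simp only [res, cond_false] at eb
    rw [eb, finsum_mem_coe_finset, Finset.sum_image (hinj _),
      sum_cons_split (fun s => s.head? = some false ∧ cnt s = h)
        (fun s => u ^ lcount k a (fmap a b k s) * v ^ lcount k b (fmap a b k s)
          * q ^ (fmap a b k s).sum)]
    have hemp : Finset.filter (fun t => (true :: t).head? = some false
        ∧ cnt (true :: t) = h) (boolLists (n+1)) = ∅ :=
      Finset.filter_eq_empty_iff.2 (by intro t _; simp)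
    have hfc : Finset.filter (fun t => (false :: t).head? = some false
        ∧ cnt (false :: t) = h) (boolLists (n+1))
        = Finset.filter (fun t => cnt (false :: t) = h) (boolLists (n+1)) :=
      Finset.filter_congr (by intro t _; simp)
    rw [hemp, Finset.sum_empty, zero_add, hfc]
    rw [sum_snoc_split (fun t => cnt (false :: t) = h)
      (fun t => u ^ lcount k a (fmap a b k (false :: t))
        * v ^ lcount k b (fmap a b k (false :: t)) * q ^ (fmap a b k (false :: t)).sum)]
    have hcond : ∀ (r : Bool) (mid : List Bool),
        (cnt (false :: (mid ++ [r])) = h) = (mid.count true = h) := by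
      intro r mid
      rw [show false :: (mid ++ [r]) = (false :: mid) ++ [r] from rfl, cnt_concat]
      simp [List.count_cons]
    have hbranch : ∀ r : Bool,
        ∑ mid ∈ (boolLists n).filter (fun mid => cnt (false :: (mid ++ [r])) = h),
          (u ^ lcount k a (fmap a b k (false :: (mid ++ [r])))
            * v ^ lcount k b (fmap a b k (false :: (mid ++ [r])))
            * q ^ (fmap a b k (false :: (mid ++ [r]))).sum)
        = (u ^ (h + (bif r then 1 else 0)) * v ^ ((n - h) + 1 + (bif r then 0 else 1))
            * q ^ (a * (h + (bif r then 1 else 0)) + b * ((n - h) + 1 + (bif r then 0 else 1))))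
            * Flist (q ^ k) 2 n h := by
      intro r
      rw [Flist, Finset.mul_sum]
      apply Finset.sum_congr
      · apply Finset.filter_congr
        intro mid _
        rw [hcond]
      · intro mid hmid
        obtain ⟨hmlen, hmcnt⟩ := Finset.mem_filter.1 hmid
        have hmlen' : mid.length = n := mem_boolLists.1 hmlen
        have hmf : mid.count false = n - h := by
          have := count_true_add_false ha hab hbk mid
          omega
        rw [show false :: (mid ++ [r]) = (false :: mid) ++ [r] from rfl,
          fmap_lcount_a ha hab hbk, fmap_lcount_b ha hab hbk, fmap_sum ha hab hbk,
          List.dropLast_concat]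
        have h1 : ((false :: mid) ++ [r]).count true = h + (bif r then 1 else 0) := by
          cases r <;> simp [List.count_append, List.count_cons, hmcnt]
        have h2 : ((false :: mid) ++ [r]).count false = (n - h) + 1 + (bif r then 0 else 1) := by
          cases r <;> simp [List.count_append, List.count_cons, hmf] <;> omega
        have h3 : wsum 1 (false :: mid) = wsum 2 mid := by simp [wsum]
        rw [h1, h2, h3]
        ring
    rw [hbranch true, hbranch false, Flist_eq (q ^ k) hQ n 2 h]
    simp only [cond_true, cond_false]
    rw [show n + 2 - h - 1 = n - h + 1 from by omega, show n + 2 - 2 = n from by omega,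
      show n + 2 - 1 = n + 1 from by omega, choose_two_succ]
    obtain ⟨e, rfl⟩ : ∃ e, k = b + e := ⟨k - b, by omega⟩
    obtain ⟨g, rfl⟩ : ∃ g, n = h + g := ⟨n - h, by omega⟩
    rw [show h + g - h = g from by omega, show b + e - b + a = e + a from by omega]
    ring
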